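/- There exists an RCM over two binary variables X', Y' and a single unit that satisfies effectiveness, and satisfies the conjunction X' = 1 ∧ Y' = 1 ∧ Y'_{X'=1} = 0 ∧ X'_{Y'=0} = 1, and this RCM violates composition; moreover it is the constructive abstraction of a representable RCM over variables X (ternary) and Y (binary) satisfying X = 1 ∧ Y = 1 ∧ Y_{X=2} = 0 ∧ X_{Y=0} = 1, under the translation collapsing X ∈ {1,2} to X' = 1. -/

import Mathlib

open scoped Classical

/-- An intervention: a partial assignment of values to variables. -/
def Itv (V : Type*) (Val : V → Type*) := ∀ v, Option (Val v)

/-- A potential outcome `Y_x`: an outcome variable together with an intervention. -/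
structure PO (V : Type*) (Val : V → Type*) where
  Y : V
  x : Itv V Val

/-- A Rubin causal model (with a probability distribution on its units). -/
structure RCM (U : Type*) (V : Type*) (Val : V → Type*) where
  O : Set (PO V Val)
  F : (o : PO V Val) → U → Val o.Y
  P : U → ℝ
  P_nonneg : ∀ u, 0 ≤ P u
  P_sum : ∑ᶠ u, P u = 1

/-- Joint valuations ("counterfactuals") of a set of potential outcomes. -/
def CFVal {V : Type*} {Val : V → Type*} (O : Set (PO V Val)) :=
  (o : O) → Val o.1.Y

/-- The (pushforward) counterfactual distribution of an RCM, computed on a set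
of potential outcomes. -/
noncomputable def RCM.cfOn {U V : Type*} {Val : V → Type*} (R : RCM U V Val)
    (O : Set (PO V Val)) (g : CFVal O) : ℝ :=
  ∑ᶠ u, if ∀ o : O, R.F o.1 u = g o then R.P u else 0

/-- The counterfactual distribution of an RCM on its own defined outcomes. -/
noncomputable def RCM.cf {U V : Type*} {Val : V → Type*} (R : RCM U V Val)
    (g : CFVal R.O) : ℝ := R.cfOn R.O g

/-- Effectiveness: intervened variables take their intervened values. -/
def RCM.Effective {U V : Type*} {Val : V → Type*} (R : RCM U V Val) : Prop :=
  ∀ o, o ∈ R.O → ∀ u, ∀ y : Val o.Y, o.x o.Y = some y → R.F o u = y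

/-- Update an intervention at one variable. -/
noncomputable def upd {V : Type*} {Val : V → Type*} (x : Itv V Val) (Y : V) (y : Val Y) :
    Itv V Val :=
  fun v => if h : v = Y then some (cast (congrArg Val h.symm) y) else x v

/-- Composition, at every unit, whenever the relevant outcomes are defined. -/
def RCM.Composition {U V : Type*} {Val : V → Type*} (R : RCM U V Val) : Prop :=
  ∀ (u : U) (Y Z : V) (w : Itv V Val),
    (⟨Y, w⟩ : PO V Val) ∈ R.O → (⟨Z, w⟩ : PO V Val) ∈ R.O →
    (⟨Z, upd w Y (R.F ⟨Y, w⟩ u)⟩ : PO V Val) ∈ R.O →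
    R.F ⟨Z, upd w Y (R.F ⟨Y, w⟩ u)⟩ u = R.F ⟨Z, w⟩ u

/-- Reversibility, at every unit, whenever the relevant outcomes are defined. -/
def RCM.Reversibility {U V : Type*} {Val : V → Type*} (R : RCM U V Val) : Prop :=
  ∀ (u : U) (Y Z : V) (w : Itv V Val) (y : Val Y) (z : Val Z), Y ≠ Z →
    (⟨Y, upd w Z z⟩ : PO V Val) ∈ R.O → (⟨Z, upd w Y y⟩ : PO V Val) ∈ R.O →
    (⟨Y, w⟩ : PO V Val) ∈ R.O →
    R.F ⟨Y, upd w Z z⟩ u = y → R.F ⟨Z, upd w Y y⟩ u = z →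
    R.F ⟨Y, w⟩ u = y

/-- A structural causal model. -/
structure SCM (Uex : Type*) (V : Type*) (Val : V → Type*) where
  Pa : V → Set V
  Pa_irr : ∀ v, v ∉ Pa v
  f : (v : V) → ((w : V) → Val w) → Uex → Val v
  f_dep : ∀ v a b u, (∀ w ∈ Pa v, a w = b w) → f v a u = f v b u
  P : Uex → ℝ
  P_nonneg : ∀ u, 0 ≤ P u
  P_sum : ∑ᶠ u, P u = 1

/-- `s` solves the manipulated model `M_x` under exogenous setting `u`. -/
def SCM.IsSol {Uex V : Type*} {Val : V → Type*} (M : SCM Uex V Val)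
    (x : Itv V Val) (u : Uex) (s : ∀ w, Val w) : Prop :=
  ∀ w, s w = (x w).getD (M.f w s u)

/-- `M` has a unique solution under every intervention and exogenous setting. -/
def SCM.Uniq {Uex V : Type*} {Val : V → Type*} (M : SCM Uex V Val) : Prop :=
  ∀ (x : Itv V Val) (u : Uex), ∃! s, M.IsSol x u s

/-- The potential outcome `Y_x(u)` of an SCM with unique solutions. -/
noncomputable def SCM.po {Uex V : Type*} {Val : V → Type*} (M : SCM Uex V Val)
    (h : M.Uniq) (o : PO V Val) (u : Uex) : Val o.Y :=
  (h o.x u).exists.choose o.Y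

/-- The counterfactual distribution of an SCM on a set of potential outcomes. -/
noncomputable def SCM.cf {Uex V : Type*} {Val : V → Type*} (M : SCM Uex V Val)
    (h : M.Uniq) (O : Set (PO V Val)) (g : CFVal O) : ℝ :=
  ∑ᶠ u, if ∀ o : O, M.po h o.1 u = g o then M.P u else 0

/-- `M` represents `R`: the counterfactual distribution of `M` marginalizes to
that of `R` on the outcomes defined by `R`. -/
def Represents {Uex U V : Type*} {Val : V → Type*} (M : SCM Uex V Val) (h : M.Uniq)
    (R : RCM U V Val) : Prop :=
  ∀ g : CFVal R.O, M.cf h R.O g = R.cf g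

/-- `R` is representable by some SCM with unique solutions. -/
def RCM.Representable {U V : Type*} {Val : V → Type*} (R : RCM U V Val) : Prop :=
  ∃ (Uex : Type) (M : SCM Uex V Val) (h : M.Uniq), Finite Uex ∧ Represents M h R

/-- `R'` extends `R`. -/
def RCM.Extends {U V : Type*} {Val : V → Type*} (R' R : RCM U V Val) : Prop :=
  R.O ⊆ R'.O ∧ (∀ o ∈ R.O, R'.F o = R.F o) ∧ R'.P = R.P

/-- A full RCM defines every potential outcome. -/
def RCM.Full {U V : Type*} {Val : V → Type*} (R : RCM U V Val) : Prop :=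
  R.O = Set.univ

/-- `R'` is a submodel of `R`. -/
def Submodel {U V : Type*} {Val : V → Type*} (R' R : RCM U V Val) : Prop :=
  R'.O ⊆ R.O ∧ (∀ o ∈ R'.O, R'.F o = R.F o) ∧ R'.P = R.P

/-- A constructive translation from low-level variables `VL` to high-level
variables `VH`: a partition of (part of) `VL` into cells, one nonempty cell per
high-level variable, with a surjective value-map for each cell. -/
structure CTrans (VL : Type*) (ValL : VL → Type*) (VH : Type*) (ValH : VH → Type*) where
  cell : VL → Option VH
  cell_ne : ∀ Vh : VH, ∃ w, cell w = some Vh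
  tau : (Vh : VH) → ((w : {w : VL // cell w = some Vh}) → ValL w.1) → ValH Vh
  tau_surj : ∀ Vh, Function.Surjective (tau Vh)

/-- The translation of total low-level valuations. -/
def CTrans.tot {VL VH : Type*} {ValL : VL → Type*} {ValH : VH → Type*}
    (T : CTrans VL ValL VH ValH) (g : ∀ v, ValL v) : ∀ Vh, ValH Vh :=
  fun Vh => T.tau Vh (fun w => g w.1)

/-- The total valuations extending a partial valuation. -/
def extVals {V : Type*} {Val : V → Type*} (x : Itv V Val) : Set (∀ v, Val v) :=
  {g | ∀ v, ∀ c, x v = some c → g v = c}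

/-- Canonical extension of a translation to partial valuations:
`τ(x_L) = x_H` iff the `τ`-image of the extensions of `x_L` is the set of
extensions of `x_H`. -/
def CTrans.PartTrans {VL VH : Type*} {ValL : VL → Type*} {ValH : VH → Type*}
    (T : CTrans VL ValL VH ValH) (xL : Itv VL ValL) (xH : Itv VH ValH) : Prop :=
  T.tot '' extVals xL = extVals xH

/-- The valuations of the cell of `Vh` that agree with `x_L` on the part of
its domain lying in that cell. -/
def CTrans.theta {VL VH : Type*} {ValL : VL → Type*} {ValH : VH → Type*}
    (T : CTrans VL ValL VH ValH) (xL : Itv VL ValL) (Vh : VH) :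
    Set ((w : {w : VL // T.cell w = some Vh}) → ValL w.1) :=
  {p | ∀ (w : {w : VL // T.cell w = some Vh}) (c : ValL w.1), xL w.1 = some c → p w = c}

/-- The interventions appearing in a set of potential outcomes. -/
def Intervs {V : Type*} {Val : V → Type*} (O : Set (PO V Val)) : Set (Itv V Val) :=
  {x | ∃ Y, (⟨Y, x⟩ : PO V Val) ∈ O}

/-- The partial valuation recording the outcomes a counterfactual assigns
under a fixed intervention. -/
noncomputable def ypart {V : Type*} {Val : V → Type*} (O : Set (PO V Val))
    (g : CFVal O) (x : Itv V Val) : Itv V Val :=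
  fun Y => if h : (⟨Y, x⟩ : PO V Val) ∈ O then some (g ⟨⟨Y, x⟩, h⟩) else none

/-- Counterfactual translation induced by a constructive translation. -/
def CTrans.CFTrans {VL VH : Type*} {ValL : VL → Type*} {ValH : VH → Type*}
    (T : CTrans VL ValL VH ValH) (OL : Set (PO VL ValL)) (OH : Set (PO VH ValH))
    (gL : CFVal OL) (gH : CFVal OH) : Prop :=
  (∀ xL ∈ Intervs OL, ∃ xH ∈ Intervs OH, T.PartTrans xL xH) ∧
  (∀ xH ∈ Intervs OH, ∃ xL ∈ Intervs OL, T.PartTrans xL xH) ∧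
  (∀ xL ∈ Intervs OL, ∀ xH ∈ Intervs OH, T.PartTrans xL xH →
    T.PartTrans (ypart OL gL xL) (ypart OH gH xH))

/-- `H ≺_τ L`: the counterfactual distribution of `H` is the pushforward of
that of `L` under the counterfactual translation induced by `T`. -/
def Abstraction {UH UL VH VL : Type*} {ValH : VH → Type*} {ValL : VL → Type*}
    (T : CTrans VL ValL VH ValH) (H : RCM UH VH ValH) (L : RCM UL VL ValL) : Prop :=
  ∀ gH : CFVal H.O,
    H.cf gH = ∑ᶠ gL : CFVal L.O,
      if T.CFTrans L.O H.O gL gH then L.cf gL else 0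

/-- Low-level value spaces: `X` (variable `0`) is ternary, `Y` (variable `1`)
is binary. -/
@[reducible] def Val10L : Fin 2 → Type := fun v => if v = 0 then Fin 3 else Fin 2

/-- The empty intervention, high level. -/
def e2H : Itv (Fin 2) (fun _ => Fin 2) := fun _ => none

/-- The empty intervention, low level. -/
def e2L : Itv (Fin 2) Val10L := fun _ => none

/-! ### Auxiliary constructions -/

section Aux10

lemma upd_self' {V : Type*} {Val : V → Type*} (x : Itv V Val) (Y : V) (y : Val Y) :
    upd x Y y Y = some y := by simp [upd]

lemma upd_ne' {V : Type*} {Val : V → Type*} (x : Itv V Val) (Y : V) (y : Val Y)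
    (v : V) (h : v ≠ Y) : upd x Y y v = x v := by simp [upd, h]

noncomputable def xH2 : Itv (Fin 2) (fun _ => Fin 2) := upd e2H 0 (1 : Fin 2)
noncomputable def xHy : Itv (Fin 2) (fun _ => Fin 2) := upd e2H 1 (0 : Fin 2)
noncomputable def xL2 : Itv (Fin 2) Val10L := upd e2L 0 (2 : Fin 3)
noncomputable def xLy : Itv (Fin 2) Val10L := upd e2L 1 (0 : Fin 2)

def mk2 (a : Fin 3) (b : Fin 2) : ∀ v : Fin 2, Val10L v := fun v =>
  match v with
  | ⟨0, _⟩ => a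
  | ⟨1, _⟩ => b

@[simp] lemma mk2_0 (a b) : mk2 a b 0 = a := rfl
@[simp] lemma mk2_1 (a b) : mk2 a b 1 = b := rfl

noncomputable def OH10 : Set (PO (Fin 2) (fun _ => Fin 2)) :=
  {⟨0, e2H⟩, ⟨1, e2H⟩, ⟨1, xH2⟩, ⟨0, xHy⟩}

def hF10 : (o : PO (Fin 2) (fun _ => Fin 2)) → Unit → Fin 2 :=
  fun o _ => (o.x o.Y).getD (if o.Y = 1 ∧ o.x 0 = some 1 then 0 else 1)

noncomputable def Hrcm : RCM Unit (Fin 2) (fun _ => Fin 2) where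
  O := OH10
  F := hF10
  P := fun _ => 1
  P_nonneg := fun _ => zero_le_one
  P_sum := finsum_unique _

noncomputable def dfl10 : (Y : Fin 2) → Itv (Fin 2) Val10L → Val10L Y := fun Y x =>
  match Y with
  | ⟨0, _⟩ => (1 : Fin 3)
  | ⟨1, _⟩ => if x 0 = some (2 : Fin 3) then (0 : Fin 2) else (1 : Fin 2)

noncomputable def lF10 : (o : PO (Fin 2) Val10L) → Unit → Val10L o.Y :=
  fun o _ => (o.x o.Y).getD (dfl10 o.Y o.x)

noncomputable def OL10 : Set (PO (Fin 2) Val10L) :=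
  {⟨0, e2L⟩, ⟨1, e2L⟩, ⟨1, xL2⟩, ⟨0, xLy⟩}

noncomputable def Lrcm : RCM Unit (Fin 2) Val10L where
  O := OL10
  F := lF10
  P := fun _ => 1
  P_nonneg := fun _ => zero_le_one
  P_sum := finsum_unique _

-- computed values of hF10 / lF10 on the relevant outcomes
lemma hF_1 : ∀ u, hF10 ⟨0, e2H⟩ u = 1 := fun _ => rfl
lemma hF_2 : ∀ u, hF10 ⟨1, e2H⟩ u = 1 := fun _ => rfl
lemma hF_3 : ∀ u, hF10 ⟨1, xH2⟩ u = 0 := by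
  intro u
  simp [hF10, xH2, upd_self', upd_ne', e2H]
lemma hF_4 : ∀ u, hF10 ⟨0, xHy⟩ u = 1 := by
  intro u
  simp [hF10, xHy, upd_ne', e2H]

lemma lF_1 : ∀ u, lF10 ⟨0, e2L⟩ u = (1 : Fin 3) := fun _ => rfl
lemma lF_2 : ∀ u, lF10 ⟨1, e2L⟩ u = (1 : Fin 2) := by
  intro u; simp [lF10, dfl10, e2L]
lemma lF_3 : ∀ u, lF10 ⟨1, xL2⟩ u = (0 : Fin 2) := by
  intro u
  simp [lF10, dfl10, xL2, upd_self', upd_ne', e2L]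
lemma lF_4 : ∀ u, lF10 ⟨0, xLy⟩ u = (1 : Fin 3) := by
  intro u
  simp [lF10, dfl10, xLy, upd_ne', e2L]

end Aux10

section SCM10

noncomputable def Msc : SCM Unit (Fin 2) Val10L where
  Pa := fun v => if v = 1 then {0} else ∅
  Pa_irr := by intro v; fin_cases v <;> simp
  f := fun v => match v with
    | ⟨0, _⟩ => fun _ _ => (1 : Fin 3)
    | ⟨1, _⟩ => fun s _ => if s 0 = (2 : Fin 3) then (0 : Fin 2) else (1 : Fin 2)
  f_dep := by
    intro v a b u hab
    fin_cases v
    · rfl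
    · have h0 : a 0 = b 0 := hab 0 (by simp)
      show (if a 0 = (2:Fin 3) then (0:Fin 2) else 1) = (if b 0 = (2:Fin 3) then (0:Fin 2) else 1)
      rw [h0]
  P := fun _ => 1
  P_nonneg := fun _ => zero_le_one
  P_sum := finsum_unique _

noncomputable def sol10 (x : Itv (Fin 2) Val10L) : ∀ v, Val10L v :=
  mk2 ((x 0).getD (1 : Fin 3))
      ((x 1).getD (if (x 0).getD (1 : Fin 3) = (2 : Fin 3) then (0 : Fin 2) else (1 : Fin 2)))

lemma sol10_isSol (x : Itv (Fin 2) Val10L) (u : Unit) : Msc.IsSol x u (sol10 x) := by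
  intro w
  fin_cases w <;> rfl

lemma Msc_uniq : Msc.Uniq := by
  intro x u
  refine ⟨sol10 x, sol10_isSol x u, ?_⟩
  intro s hs
  have h0 : s 0 = sol10 x 0 := hs 0
  funext v
  fin_cases v
  · exact h0
  · have h1 := hs 1
    show s 1 = sol10 x 1
    rw [h1]
    show (x 1).getD (if s 0 = (2:Fin 3) then (0:Fin 2) else (1:Fin 2)) = _
    rw [h0]
    rfl

lemma Msc_po (o : PO (Fin 2) Val10L) (u : Unit) :
    Msc.po Msc_uniq o u = sol10 o.x o.Y := by
  have h := Msc_uniq o.x u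
  have := h.unique h.exists.choose_spec (sol10_isSol o.x u)
  exact congrFun this o.Y

end SCM10

section Trans10

def toH : Fin 3 → Fin 2 := fun a => if a = 0 then 0 else 1
def toL : Fin 2 → Fin 3 := fun y => if y = 0 then 0 else 1

def T10 : CTrans (Fin 2) Val10L (Fin 2) (fun _ => Fin 2) where
  cell := fun v => some v
  cell_ne := fun Vh => ⟨Vh, rfl⟩
  tau := fun Vh => match Vh with
    | ⟨0, _⟩ => fun p => toH (p ⟨0, rfl⟩)
    | ⟨1, _⟩ => fun p => p ⟨1, rfl⟩
  tau_surj := fun Vh => match Vh with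
    | ⟨0, _⟩ => fun y => ⟨fun w => mk2 (toL y) 0 w.1, by fin_cases y <;> rfl⟩
    | ⟨1, _⟩ => fun y => ⟨fun w => mk2 0 y w.1, rfl⟩

lemma T10_tot_0 (g : ∀ v, Val10L v) :
    T10.tot g 0 = (if g 0 = (0 : Fin 3) then 0 else 1) := by
  show toH (g 0) = _
  by_cases h : g 0 = (0 : Fin 3) <;> simp [toH, h]

@[simp] lemma T10_tot_1 (g : ∀ v, Val10L v) : T10.tot g 1 = g 1 := rfl

@[simp] lemma toH_0 : toH 0 = 0 := rfl
@[simp] lemma toH_1 : toH 1 = 1 := rfl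
@[simp] lemma toH_2 : toH 2 = 1 := rfl

lemma T10_tot_0' (g : ∀ v, Val10L v) : T10.tot g 0 = toH (g 0) := rfl

end Trans10

section Sets10

lemma extVals_two {Val : Fin 2 → Type*} (x : Itv (Fin 2) Val) :
    extVals x = {g | (∀ c, x 0 = some c → g 0 = c) ∧ (∀ c, x 1 = some c → g 1 = c)} := by
  ext g
  constructor
  · intro H; exact ⟨H 0, H 1⟩
  · rintro ⟨h0, h1⟩ v
    fin_cases v
    · exact h0
    · exact h1

lemma toH_toL : ∀ y, toH (toL y) = y := by decide

lemma extVals_e2H : extVals e2H = Set.univ := by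
  ext g; simp [extVals, e2H]

lemma extVals_e2L : extVals e2L = Set.univ := by
  ext g; simp [extVals, e2L]

lemma extVals_none_upd {Val : Fin 2 → Type*} (eN : Itv (Fin 2) Val)
    (hN : ∀ v, eN v = none) (Y : Fin 2) (y : Val Y) :
    extVals (upd eN Y y) = {g | g Y = y} := by
  ext g
  constructor
  · intro H
    exact H Y y (upd_self' _ _ _)
  · intro h v c hc
    by_cases hv : v = Y
    · subst hv
      rw [upd_self'] at hc
      cases hc
      exact h
    · rw [upd_ne' _ _ _ _ hv, hN] at hc
      cases hc

lemma extVals_xH2 : extVals xH2 = {h | h 0 = 1} :=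
  extVals_none_upd e2H (fun _ => rfl) 0 1

lemma extVals_xHy : extVals xHy = {h | h 1 = 0} :=
  extVals_none_upd e2H (fun _ => rfl) 1 0

lemma extVals_xL2 : extVals xL2 = {g | g 0 = (2 : Fin 3)} :=
  extVals_none_upd e2L (fun _ => rfl) 0 (2 : Fin 3)

lemma extVals_xLy : extVals xLy = {g | g 1 = (0 : Fin 2)} :=
  extVals_none_upd e2L (fun _ => rfl) 1 (0 : Fin 2)

-- images under T10.tot
lemma img_univ : T10.tot '' Set.univ = Set.univ := by
  rw [Set.image_univ, Set.range_eq_univ]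
  intro h
  refine ⟨mk2 (toL (h 0)) (h 1), ?_⟩
  funext v
  fin_cases v
  · show toH (toL (h 0)) = h 0
    rw [toH_toL]
  · rfl

lemma img_X2 : T10.tot '' {g | g 0 = (2 : Fin 3)} = {h | h 0 = 1} := by
  ext h
  constructor
  · rintro ⟨g, hg, rfl⟩
    show T10.tot g 0 = 1
    rw [T10_tot_0', hg]
    rfl
  · intro hh
    refine ⟨mk2 2 (h 1), rfl, ?_⟩
    funext v
    fin_cases v
    · show toH 2 = h 0
      rw [hh]; rfl
    · rfl

lemma img_X1 : T10.tot '' {g | g 0 = (1 : Fin 3)} = {h | h 0 = 1} := by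
  ext h
  constructor
  · rintro ⟨g, hg, rfl⟩
    show T10.tot g 0 = 1
    rw [T10_tot_0', hg]
    rfl
  · intro hh
    refine ⟨mk2 1 (h 1), rfl, ?_⟩
    funext v
    fin_cases v
    · show toH 1 = h 0
      rw [hh]; rfl
    · rfl

lemma img_Y0 : T10.tot '' {g | g 1 = (0 : Fin 2)} = {h | h 1 = 0} := by
  ext h
  constructor
  · rintro ⟨g, hg, rfl⟩
    exact hg
  · intro hh
    refine ⟨mk2 (toL (h 0)) 0, rfl, ?_⟩
    funext v
    fin_cases v
    · show toH (toL (h 0)) = h 0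
      rw [toH_toL]
    · exact hh.symm

lemma img_11 : T10.tot '' {g | g 0 = (1 : Fin 3) ∧ g 1 = (1 : Fin 2)} =
    {h | h 0 = 1 ∧ h 1 = 1} := by
  ext h
  constructor
  · rintro ⟨g, ⟨hg0, hg1⟩, rfl⟩
    constructor
    · show toH (g 0) = 1
      rw [hg0]; rfl
    · exact hg1
  · rintro ⟨h0, h1⟩
    refine ⟨mk2 1 1, ⟨rfl, rfl⟩, ?_⟩
    funext v
    fin_cases v
    · show toH 1 = h 0
      rw [h0]; rfl
    · exact h1.symm

-- the three relevant sets are pairwise distinct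
lemma sne_univ_X : (Set.univ : Set (∀ _ : Fin 2, Fin 2)) ≠ {h | h 0 = 1} := by
  intro h
  have : (fun _ => 0 : ∀ _ : Fin 2, Fin 2) ∈ {h : ∀ _ : Fin 2, Fin 2 | h 0 = 1} :=
    h ▸ Set.mem_univ _
  exact absurd this (by decide)

lemma sne_univ_Y : (Set.univ : Set (∀ _ : Fin 2, Fin 2)) ≠ {h | h 1 = 0} := by
  intro h
  have : (fun _ => 1 : ∀ _ : Fin 2, Fin 2) ∈ {h : ∀ _ : Fin 2, Fin 2 | h 1 = 0} :=
    h ▸ Set.mem_univ _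
  exact absurd this (by decide)

lemma sne_X_Y : ({h | h 0 = 1} : Set (∀ _ : Fin 2, Fin 2)) ≠ {h | h 1 = 0} := by
  intro h
  have : (fun _ => 1 : ∀ _ : Fin 2, Fin 2) ∈ ({h : ∀ _ : Fin 2, Fin 2 | h 0 = 1}) := rfl
  rw [h] at this
  exact absurd this (by decide)

end Sets10

section Mem10

-- distinctness of interventions
lemma xH2_ne_e2H : xH2 ≠ e2H := by
  intro h
  have := congrFun h 0
  rw [show xH2 0 = some 1 from upd_self' _ _ _] at this
  exact Option.some_ne_none _ this

lemma xHy_ne_e2H : xHy ≠ e2H := by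
  intro h
  have := congrFun h 1
  rw [show xHy 1 = some 0 from upd_self' _ _ _] at this
  exact Option.some_ne_none _ this

lemma xH2_ne_xHy : xH2 ≠ xHy := by
  intro h
  have := congrFun h 0
  rw [show xH2 0 = some 1 from upd_self' _ _ _,
    show xHy 0 = none from upd_ne' _ _ _ _ (by decide)] at this
  exact Option.some_ne_none _ this

lemma xL2_ne_e2L : xL2 ≠ e2L := by
  intro h
  have := congrFun h 0
  rw [show xL2 0 = some (2 : Fin 3) from upd_self' _ _ _] at this
  exact Option.some_ne_none _ this

lemma xLy_ne_e2L : xLy ≠ e2L := by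
  intro h
  have := congrFun h 1
  rw [show xLy 1 = some (0 : Fin 2) from upd_self' _ _ _] at this
  exact Option.some_ne_none _ this

lemma xL2_ne_xLy : xL2 ≠ xLy := by
  intro h
  have := congrFun h 0
  rw [show xL2 0 = some (2 : Fin 3) from upd_self' _ _ _,
    show xLy 0 = none from upd_ne' _ _ _ _ (by decide)] at this
  exact Option.some_ne_none _ this

-- membership facts
lemma memH1 : (⟨0, e2H⟩ : PO (Fin 2) (fun _ => Fin 2)) ∈ OH10 := Or.inl rfl
lemma memH2 : (⟨1, e2H⟩ : PO (Fin 2) (fun _ => Fin 2)) ∈ OH10 := Or.inr (Or.inl rfl)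
lemma memH3 : (⟨1, xH2⟩ : PO (Fin 2) (fun _ => Fin 2)) ∈ OH10 :=
  Or.inr (Or.inr (Or.inl rfl))
lemma memH4 : (⟨0, xHy⟩ : PO (Fin 2) (fun _ => Fin 2)) ∈ OH10 :=
  Or.inr (Or.inr (Or.inr rfl))

lemma memL1 : (⟨0, e2L⟩ : PO (Fin 2) Val10L) ∈ OL10 := Or.inl rfl
lemma memL2 : (⟨1, e2L⟩ : PO (Fin 2) Val10L) ∈ OL10 := Or.inr (Or.inl rfl)
lemma memL3 : (⟨1, xL2⟩ : PO (Fin 2) Val10L) ∈ OL10 := Or.inr (Or.inr (Or.inl rfl))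
lemma memL4 : (⟨0, xLy⟩ : PO (Fin 2) Val10L) ∈ OL10 := Or.inr (Or.inr (Or.inr rfl))

lemma memOH_cases {o : PO (Fin 2) (fun _ => Fin 2)} (h : o ∈ OH10) :
    o = ⟨0, e2H⟩ ∨ o = ⟨1, e2H⟩ ∨ o = ⟨1, xH2⟩ ∨ o = ⟨0, xHy⟩ := h

lemma memOL_cases {o : PO (Fin 2) Val10L} (h : o ∈ OL10) :
    o = ⟨0, e2L⟩ ∨ o = ⟨1, e2L⟩ ∨ o = ⟨1, xL2⟩ ∨ o = ⟨0, xLy⟩ := h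

lemma notmem_0xL2 : (⟨0, xL2⟩ : PO (Fin 2) Val10L) ∉ OL10 := by
  intro h
  rcases memOL_cases h with h | h | h | h <;>
    rw [PO.mk.injEq] at h
  · exact xL2_ne_e2L h.2
  · exact absurd h.1 (by decide)
  · exact absurd h.1 (by decide)
  · exact xL2_ne_xLy h.2

lemma notmem_1xLy : (⟨1, xLy⟩ : PO (Fin 2) Val10L) ∉ OL10 := by
  intro h
  rcases memOL_cases h with h | h | h | h <;>
    rw [PO.mk.injEq] at h
  · exact absurd h.1 (by decide)
  · exact xLy_ne_e2L h.2
  · exact xL2_ne_xLy h.2.symm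
  · exact absurd h.1 (by decide)

lemma notmem_0xH2 : (⟨0, xH2⟩ : PO (Fin 2) (fun _ => Fin 2)) ∉ OH10 := by
  intro h
  rcases memOH_cases h with h | h | h | h <;>
    rw [PO.mk.injEq] at h
  · exact xH2_ne_e2H h.2
  · exact absurd h.1 (by decide)
  · exact absurd h.1 (by decide)
  · exact xH2_ne_xHy h.2

lemma notmem_1xHy : (⟨1, xHy⟩ : PO (Fin 2) (fun _ => Fin 2)) ∉ OH10 := by
  intro h
  rcases memOH_cases h with h | h | h | h <;>
    rw [PO.mk.injEq] at h
  · exact absurd h.1 (by decide)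
  · exact xHy_ne_e2H h.2
  · exact xH2_ne_xHy h.2.symm
  · exact absurd h.1 (by decide)

-- Intervs characterizations
lemma memIntervsOL {x : Itv (Fin 2) Val10L} (h : x ∈ Intervs OL10) :
    x = e2L ∨ x = xL2 ∨ x = xLy := by
  obtain ⟨Y, hY⟩ := h
  rcases memOL_cases hY with h | h | h | h <;> rw [PO.mk.injEq] at h
  · exact Or.inl h.2
  · exact Or.inl h.2
  · exact Or.inr (Or.inl h.2)
  · exact Or.inr (Or.inr h.2)

lemma memIntervsOH {x : Itv (Fin 2) (fun _ => Fin 2)} (h : x ∈ Intervs OH10) :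
    x = e2H ∨ x = xH2 ∨ x = xHy := by
  obtain ⟨Y, hY⟩ := h
  rcases memOH_cases hY with h | h | h | h <;> rw [PO.mk.injEq] at h
  · exact Or.inl h.2
  · exact Or.inl h.2
  · exact Or.inr (Or.inl h.2)
  · exact Or.inr (Or.inr h.2)

lemma e2L_mem : e2L ∈ Intervs OL10 := ⟨0, memL1⟩
lemma xL2_mem : xL2 ∈ Intervs OL10 := ⟨1, memL3⟩
lemma xLy_mem : xLy ∈ Intervs OL10 := ⟨0, memL4⟩
lemma e2H_mem : e2H ∈ Intervs OH10 := ⟨0, memH1⟩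
lemma xH2_mem : xH2 ∈ Intervs OH10 := ⟨1, memH3⟩
lemma xHy_mem : xHy ∈ Intervs OH10 := ⟨0, memH4⟩

end Mem10

section Ypart10

lemma ypart_pos {V : Type*} {Val : V → Type*} (O : Set (PO V Val)) (g : CFVal O)
    (x : Itv V Val) (Y : V) (h : (⟨Y, x⟩ : PO V Val) ∈ O) :
    ypart O g x Y = some (g ⟨⟨Y, x⟩, h⟩) := dif_pos h

lemma ypart_neg {V : Type*} {Val : V → Type*} (O : Set (PO V Val)) (g : CFVal O)
    (x : Itv V Val) (Y : V) (h : (⟨Y, x⟩ : PO V Val) ∉ O) :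
    ypart O g x Y = none := dif_neg h

noncomputable def gL0 : CFVal OL10 := fun o => lF10 o.1 ()
noncomputable def gH0 : CFVal OH10 := fun o => hF10 o.1 ()

lemma gH0_1 : gH0 ⟨⟨0, e2H⟩, memH1⟩ = 1 := hF_1 ()
lemma gH0_2 : gH0 ⟨⟨1, e2H⟩, memH2⟩ = 1 := hF_2 ()
lemma gH0_3 : gH0 ⟨⟨1, xH2⟩, memH3⟩ = 0 := hF_3 ()
lemma gH0_4 : gH0 ⟨⟨0, xHy⟩, memH4⟩ = 1 := hF_4 ()

-- extVals of L-side yparts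
lemma ev_ypL_e2L : extVals (ypart OL10 gL0 e2L) =
    {g | g 0 = (1 : Fin 3) ∧ g 1 = (1 : Fin 2)} := by
  rw [extVals_two]
  have h0 : ypart OL10 gL0 e2L 0 = some (1 : Fin 3) := by
    rw [ypart_pos OL10 gL0 e2L 0 memL1]; exact congrArg some (lF_1 ())
  have h1 : ypart OL10 gL0 e2L 1 = some (1 : Fin 2) := by
    rw [ypart_pos OL10 gL0 e2L 1 memL2]; exact congrArg some (lF_2 ())
  ext g
  simp [h0, h1]

lemma ev_ypL_xL2 : extVals (ypart OL10 gL0 xL2) = {g | g 1 = (0 : Fin 2)} := by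
  rw [extVals_two]
  have h0 : ypart OL10 gL0 xL2 0 = none := ypart_neg _ _ _ _ notmem_0xL2
  have h1 : ypart OL10 gL0 xL2 1 = some (0 : Fin 2) := by
    rw [ypart_pos OL10 gL0 xL2 1 memL3]; exact congrArg some (lF_3 ())
  ext g
  simp [h0, h1]

lemma ev_ypL_xLy : extVals (ypart OL10 gL0 xLy) = {g | g 0 = (1 : Fin 3)} := by
  rw [extVals_two]
  have h0 : ypart OL10 gL0 xLy 0 = some (1 : Fin 3) := by
    rw [ypart_pos OL10 gL0 xLy 0 memL4]; exact congrArg some (lF_4 ())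
  have h1 : ypart OL10 gL0 xLy 1 = none := ypart_neg _ _ _ _ notmem_1xLy
  ext g
  simp [h0, h1]

-- extVals of H-side yparts, arbitrary gH
lemma ev_ypH_e2H (gH : CFVal OH10) : extVals (ypart OH10 gH e2H) =
    {h | h 0 = gH ⟨⟨0, e2H⟩, memH1⟩ ∧ h 1 = gH ⟨⟨1, e2H⟩, memH2⟩} := by
  rw [extVals_two]
  have h0 := ypart_pos OH10 gH e2H 0 memH1
  have h1 := ypart_pos OH10 gH e2H 1 memH2
  ext h
  simp [h0, h1]

lemma ev_ypH_xH2 (gH : CFVal OH10) : extVals (ypart OH10 gH xH2) =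
    {h | h 1 = gH ⟨⟨1, xH2⟩, memH3⟩} := by
  rw [extVals_two]
  have h0 : ypart OH10 gH xH2 0 = none := ypart_neg _ _ _ _ notmem_0xH2
  have h1 := ypart_pos OH10 gH xH2 1 memH3
  ext h
  simp [h0, h1]

lemma ev_ypH_xHy (gH : CFVal OH10) : extVals (ypart OH10 gH xHy) =
    {h | h 0 = gH ⟨⟨0, xHy⟩, memH4⟩} := by
  rw [extVals_two]
  have h0 := ypart_pos OH10 gH xHy 0 memH4
  have h1 : ypart OH10 gH xHy 1 = none := ypart_neg _ _ _ _ notmem_1xHy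
  ext h
  simp [h0, h1]

-- PartTrans facts
lemma PT1 : T10.PartTrans e2L e2H := by
  unfold CTrans.PartTrans
  rw [extVals_e2L, extVals_e2H, img_univ]

lemma PT2 : T10.PartTrans xL2 xH2 := by
  unfold CTrans.PartTrans
  rw [extVals_xL2, extVals_xH2, img_X2]

lemma PT3 : T10.PartTrans xLy xHy := by
  unfold CTrans.PartTrans
  rw [extVals_xLy, extVals_xHy, img_Y0]

lemma nPT1 : ¬ T10.PartTrans e2L xH2 := by
  unfold CTrans.PartTrans
  rw [extVals_e2L, extVals_xH2, img_univ]
  exact sne_univ_X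

lemma nPT2 : ¬ T10.PartTrans e2L xHy := by
  unfold CTrans.PartTrans
  rw [extVals_e2L, extVals_xHy, img_univ]
  exact sne_univ_Y

lemma nPT3 : ¬ T10.PartTrans xL2 e2H := by
  unfold CTrans.PartTrans
  rw [extVals_xL2, extVals_e2H, img_X2]
  exact fun h => sne_univ_X h.symm

lemma nPT4 : ¬ T10.PartTrans xL2 xHy := by
  unfold CTrans.PartTrans
  rw [extVals_xL2, extVals_xHy, img_X2]
  exact sne_X_Y

lemma nPT5 : ¬ T10.PartTrans xLy e2H := by
  unfold CTrans.PartTrans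
  rw [extVals_xLy, extVals_e2H, img_Y0]
  exact fun h => sne_univ_Y h.symm

lemma nPT6 : ¬ T10.PartTrans xLy xH2 := by
  unfold CTrans.PartTrans
  rw [extVals_xLy, extVals_xH2, img_Y0]
  exact fun h => sne_X_Y h.symm

-- matched ypart PartTrans for gH0
lemma YPT1 : T10.PartTrans (ypart OL10 gL0 e2L) (ypart OH10 gH0 e2H) := by
  unfold CTrans.PartTrans
  rw [ev_ypL_e2L, ev_ypH_e2H gH0, gH0_1, gH0_2, img_11]

lemma YPT2 : T10.PartTrans (ypart OL10 gL0 xL2) (ypart OH10 gH0 xH2) := by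
  unfold CTrans.PartTrans
  rw [ev_ypL_xL2, ev_ypH_xH2 gH0, gH0_3, img_Y0]

lemma YPT3 : T10.PartTrans (ypart OL10 gL0 xLy) (ypart OH10 gH0 xHy) := by
  unfold CTrans.PartTrans
  rw [ev_ypL_xLy, ev_ypH_xHy gH0, gH0_4, img_X1]

end Ypart10

section Final10

lemma cft_iff (gH : CFVal OH10) :
    T10.CFTrans OL10 OH10 gL0 gH ↔ gH = gH0 := by
  constructor
  · rintro ⟨h1, h2, h3⟩
    have p1 := h3 e2L e2L_mem e2H e2H_mem PT1
    have p2 := h3 xL2 xL2_mem xH2 xH2_mem PT2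
    have p3 := h3 xLy xLy_mem xHy xHy_mem PT3
    unfold CTrans.PartTrans at p1 p2 p3
    rw [ev_ypL_e2L, ev_ypH_e2H gH, img_11] at p1
    rw [ev_ypL_xL2, ev_ypH_xH2 gH, img_Y0] at p2
    rw [ev_ypL_xLy, ev_ypH_xHy gH, img_X1] at p3
    have q1 := (Set.ext_iff.mp p1 (fun _ => 1)).mp ⟨rfl, rfl⟩
    have q2 := (Set.ext_iff.mp p2 (fun _ => 0)).mp rfl
    have q3 := (Set.ext_iff.mp p3 (fun _ => 1)).mp rfl
    funext o
    obtain ⟨o', ho⟩ := o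
    rcases memOH_cases ho with h | h | h | h <;> subst h
    · exact q1.1.symm.trans gH0_1.symm
    · exact q1.2.symm.trans gH0_2.symm
    · exact q2.symm.trans gH0_3.symm
    · exact q3.symm.trans gH0_4.symm
  · rintro rfl
    refine ⟨?_, ?_, ?_⟩
    · intro xL hxL
      rcases memIntervsOL hxL with rfl | rfl | rfl
      · exact ⟨e2H, e2H_mem, PT1⟩
      · exact ⟨xH2, xH2_mem, PT2⟩
      · exact ⟨xHy, xHy_mem, PT3⟩
    · intro xH hxH
      rcases memIntervsOH hxH with rfl | rfl | rfl
      · exact ⟨e2L, e2L_mem, PT1⟩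
      · exact ⟨xL2, xL2_mem, PT2⟩
      · exact ⟨xLy, xLy_mem, PT3⟩
    · intro xL hxL xH hxH hPT
      rcases memIntervsOL hxL with rfl | rfl | rfl <;>
        rcases memIntervsOH hxH with rfl | rfl | rfl
      · exact YPT1
      · exact absurd hPT nPT1
      · exact absurd hPT nPT2
      · exact absurd hPT nPT3
      · exact YPT2
      · exact absurd hPT nPT4
      · exact absurd hPT nPT5
      · exact absurd hPT nPT6
      · exact YPT3

lemma Lcf_char (g : CFVal OL10) : Lrcm.cf g = if g = gL0 then 1 else 0 := by
  show Lrcm.cfOn Lrcm.O g = _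
  unfold RCM.cfOn
  rw [finsum_unique]
  refine if_congr ?_ rfl rfl
  constructor
  · intro h
    funext o
    exact (h o).symm
  · rintro rfl o
    rfl

lemma Hcf_char (g : CFVal OH10) : Hrcm.cf g = if g = gH0 then 1 else 0 := by
  show Hrcm.cfOn Hrcm.O g = _
  unfold RCM.cfOn
  rw [finsum_unique]
  refine if_congr ?_ rfl rfl
  constructor
  · intro h
    funext o
    exact (h o).symm
  · rintro rfl o
    rfl

lemma sol_key : ∀ o : PO (Fin 2) Val10L, o ∈ OL10 →
    ∀ u : Unit, Msc.po Msc_uniq o u = lF10 o u := by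
  intro o ho u
  rw [Msc_po]
  have e20 : xL2 0 = some (2 : Fin 3) := upd_self' _ _ _
  have e21 : xL2 1 = none := upd_ne' _ _ _ _ (by decide)
  have ey0 : xLy 0 = none := upd_ne' _ _ _ _ (by decide)
  have ey1 : xLy 1 = some (0 : Fin 2) := upd_self' _ _ _
  rcases memOL_cases ho with rfl | rfl | rfl | rfl
  · rfl
  · show sol10 e2L 1 = _
    rw [lF_2]
    simp [sol10, e2L]
    exact if_neg (fun h => absurd (congrArg Fin.val h) (by decide))
  · show sol10 xL2 1 = _
    rw [lF_3]
    simp [sol10, e20, e21]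
  · show sol10 xLy 0 = _
    rw [lF_4]
    simp [sol10, ey0]

lemma Lrep : Lrcm.Representable := by
  refine ⟨Unit, Msc, Msc_uniq, inferInstance, ?_⟩
  intro g
  unfold SCM.cf RCM.cf RCM.cfOn
  rw [finsum_unique, finsum_unique]
  refine if_congr ?_ rfl rfl
  constructor <;> intro h o
  · exact (sol_key o.1 o.2 default).symm.trans (h o)
  · exact (sol_key o.1 o.2 default).trans (h o)

end Final10

/-- There is an effective single-unit RCM over binary `X', Y'` realizing
`X' = 1 ∧ Y' = 1 ∧ Y'_{X'=1} = 0 ∧ X'_{Y'=0} = 1` which violates composition,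
yet is a constructive abstraction (collapsing `X ∈ {1,2}` to `X' = 1`) of a
representable RCM over a ternary `X` and binary `Y` realizing
`X = 1 ∧ Y = 1 ∧ Y_{X=2} = 0 ∧ X_{Y=0} = 1`. -/
theorem stmt10 :
    ∃ (H : RCM Unit (Fin 2) (fun _ => Fin 2)) (L : RCM Unit (Fin 2) Val10L)
      (T : CTrans (Fin 2) Val10L (Fin 2) (fun _ => Fin 2)),
      H.Effective ∧
      (⟨0, e2H⟩ : PO (Fin 2) (fun _ => Fin 2)) ∈ H.O ∧
      (⟨1, e2H⟩ : PO (Fin 2) (fun _ => Fin 2)) ∈ H.O ∧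
      (⟨1, upd e2H 0 1⟩ : PO (Fin 2) (fun _ => Fin 2)) ∈ H.O ∧
      (⟨0, upd e2H 1 0⟩ : PO (Fin 2) (fun _ => Fin 2)) ∈ H.O ∧
      (∀ u, H.F ⟨0, e2H⟩ u = 1 ∧ H.F ⟨1, e2H⟩ u = 1 ∧
        H.F ⟨1, upd e2H 0 1⟩ u = 0 ∧ H.F ⟨0, upd e2H 1 0⟩ u = 1) ∧
      ¬ H.Composition ∧
      L.Representable ∧
      (⟨0, e2L⟩ : PO (Fin 2) Val10L) ∈ L.O ∧
      (⟨1, e2L⟩ : PO (Fin 2) Val10L) ∈ L.O ∧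
      (⟨1, upd e2L 0 (2 : Fin 3)⟩ : PO (Fin 2) Val10L) ∈ L.O ∧
      (⟨0, upd e2L 1 (0 : Fin 2)⟩ : PO (Fin 2) Val10L) ∈ L.O ∧
      (∀ u, L.F ⟨0, e2L⟩ u = (1 : Fin 3) ∧ L.F ⟨1, e2L⟩ u = (1 : Fin 2) ∧
        L.F ⟨1, upd e2L 0 (2 : Fin 3)⟩ u = (0 : Fin 2) ∧
        L.F ⟨0, upd e2L 1 (0 : Fin 2)⟩ u = (1 : Fin 3)) ∧
      T.cell 0 = some 0 ∧ T.cell 1 = some 1 ∧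
      (∀ g : ∀ v, Val10L v,
        T.tot g 0 = (if g 0 = (0 : Fin 3) then 0 else 1) ∧
        T.tot g 1 = (g 1 : Fin 2)) ∧
      Abstraction T H L := by
  
  refine ⟨Hrcm, Lrcm, T10, ?_, memH1, memH2, memH3, memH4,
    (fun u => ⟨hF_1 u, hF_2 u, hF_3 u, hF_4 u⟩), ?_, Lrep, memL1, memL2, memL3, memL4,
    (fun u => ⟨lF_1 u, lF_2 u, lF_3 u, lF_4 u⟩), rfl, rfl,
    (fun g => ⟨T10_tot_0 g, rfl⟩), ?_⟩
  · intro o ho u y hy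
    show hF10 o u = y
    unfold hF10
    rw [hy]
    rfl
  · intro hC
    have h1 : Hrcm.F ⟨0, e2H⟩ () = 1 := hF_1 ()
    have h3 : (⟨1, upd e2H 0 (Hrcm.F ⟨0, e2H⟩ ())⟩ : PO (Fin 2) (fun _ => Fin 2)) ∈ Hrcm.O := by
      rw [h1]; exact memH3
    have hc := hC () 0 1 e2H memH1 memH2 h3
    rw [h1] at hc
    exact absurd ((hF_3 ()).symm.trans (hc.trans (hF_2 ()))) (by decide)
  · intro gH
    have hcong : ∀ gL : CFVal Lrcm.O,
        (if T10.CFTrans Lrcm.O Hrcm.O gL gH then Lrcm.cf gL else 0) =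
        (if gL = gL0 then (if T10.CFTrans Lrcm.O Hrcm.O gL0 gH then (1 : ℝ) else 0) else 0) := by
      intro gL
      by_cases h : gL = gL0
      · subst h
        rw [Lcf_char]
        rw [if_pos rfl]
        exact (if_pos rfl).symm
      · rw [show Lrcm.cf gL = 0 from (Lcf_char gL).trans (if_neg h), ite_self]
        exact (if_neg h).symm
    have hsum : (∑ᶠ gL : CFVal Lrcm.O,
        if T10.CFTrans Lrcm.O Hrcm.O gL gH then Lrcm.cf gL else 0) =
        (if T10.CFTrans Lrcm.O Hrcm.O gL0 gH then (1 : ℝ) else 0) := by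
      rw [finsum_congr hcong,
        finsum_eq_single
          (fun gL : CFVal Lrcm.O => if gL = gL0
            then (if T10.CFTrans Lrcm.O Hrcm.O gL0 gH then (1 : ℝ) else 0) else 0)
          gL0 (fun x hx => if_neg hx)]
      exact if_pos rfl
    rw [hsum, Hcf_char gH]
    exact if_congr (cft_iff gH).symm rfl rfl
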